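/- Let ν = (439/18144)^{1/4} and s = 9ν²/2. There exists n₀ ∈ ℕ such that for all n ≥ n₀ and all integers r with 1 ≤ r ≤ n/2, one has s^r · C(n−r−1, r−1) ≤ s^{r*} · C(n−r*−1, r*−1), where r* = ⌈n/2 − (2s+1+√Π)/(8s+2)⌉ with Π = (4s+1)·n·(n−2) + (2s+1)². -/
import Mathlib

lemma chooseId (j a : ℕ) :
    (j+1) * ((j+a+2) * Nat.choose (j+a+1) (j+1)) =
      (a+2) * ((a+1) * Nat.choose (j+a+2) j) := by
  have h1 : Nat.choose (j+a+2) j = Nat.choose (j+a+2) (a+2) := by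
    rw [← Nat.choose_symm (by omega : j ≤ j+a+2)]
    congr 1; omega
  have h2 : (j+a+2) * Nat.choose (j+a+1) (a+1) = Nat.choose (j+a+2) (a+2) * (a+2) := by
    have := Nat.add_one_mul_choose_eq (j+a+1) (a+1)
    simpa [Nat.succ_eq_add_one] using this
  have h3 : Nat.choose (j+a+1) (a+1) * (a+1) = Nat.choose (j+a+1) a * (j+1) := by
    have := Nat.choose_succ_right_eq (j+a+1) a
    simpa [show j+a+1-a = j+1 by omega] using this
  have h4 : Nat.choose (j+a+1) a = Nat.choose (j+a+1) (j+1) := by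
    rw [← Nat.choose_symm (by omega : a ≤ j+a+1)]
    congr 1; omega
  calc (j+1) * ((j+a+2) * Nat.choose (j+a+1) (j+1))
      = (j+a+2) * (Nat.choose (j+a+1) a * (j+1)) := by rw [← h4]; ring
    _ = (j+a+2) * (Nat.choose (j+a+1) (a+1) * (a+1)) := by rw [h3]
    _ = (a+1) * ((j+a+2) * Nat.choose (j+a+1) (a+1)) := by ring
    _ = (a+1) * (Nat.choose (j+a+2) (a+2) * (a+2)) := by rw [h2]
    _ = (a+2) * ((a+1) * Nat.choose (j+a+2) j) := by rw [h1]; ring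

lemma quad_up (s x N q : ℝ) (hs : 1/2 < s) (hq0 : 0 ≤ q)
    (hq2 : q^2 = (4*s+1)*N*(N-2)+(2*s+1)^2)
    (hx : x ≤ N/2 - (2*s+1+q)/(8*s+2)) :
    x*(N-x-1) ≤ s*(N-2*x)*(N-2*x-1) := by
  have h82 : (0:ℝ) < 8*s+2 := by linarith
  have h41 : (0:ℝ) < 4*s+1 := by linarith
  have h1 : (2*s+1+q)/(8*s+2) ≤ N/2 - x := by linarith
  have h2 := (div_le_iff₀ h82).mp h1
  have ht : q ≤ (4*s+1)*(N-2*x)-(2*s+1) := by nlinarith [h2]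
  have key : 0 ≤ ((4*s+1)*(N-2*x)-(2*s+1) - q) * ((4*s+1)*(N-2*x)-(2*s+1) + q) :=
    mul_nonneg (by linarith) (by linarith)
  nlinarith [key, hq2, h41]

lemma quad_down (s x N q : ℝ) (hs : 1/2 < s) (hq0 : 0 ≤ q)
    (hq2 : q^2 = (4*s+1)*N*(N-2)+(2*s+1)^2)
    (hx : N/2 - (2*s+1+q)/(8*s+2) ≤ x) (hxn : 2*x + 2 ≤ N) :
    s*(N-2*x)*(N-2*x-1) ≤ x*(N-x-1) := by
  have h82 : (0:ℝ) < 8*s+2 := by linarith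
  have h41 : (0:ℝ) < 4*s+1 := by linarith
  have h1 : N/2 - x ≤ (2*s+1+q)/(8*s+2) := by linarith
  have h2 := (le_div_iff₀ h82).mp h1
  have ht : (4*s+1)*(N-2*x)-(2*s+1) ≤ q := by nlinarith [h2]
  have htpos : 0 ≤ (4*s+1)*(N-2*x)-(2*s+1) := by nlinarith [hxn]
  have key : 0 ≤ (q - ((4*s+1)*(N-2*x)-(2*s+1))) * (q + ((4*s+1)*(N-2*x)-(2*s+1))) :=
    mul_nonneg (by linarith) (by linarith)
  nlinarith [key, hq2, h41]

/-- `r*(n) = ⌈n/2 − (2s+1+√Π)/(8s+2)⌉` where `Π = (4s+1)n(n−2) + (2s+1)²`. -/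
noncomputable def rstar (s : ℝ) (n : ℕ) : ℕ :=
  (⌈(n : ℝ) / 2 -
      (2 * s + 1 + Real.sqrt ((4 * s + 1) * n * (n - 2) + (2 * s + 1) ^ 2)) /
        (8 * s + 2)⌉).toNat

/-- The paper's constant `s = 9ν²/2` with `ν = (439/18144)^{1/4}`. -/
noncomputable def sPaper : ℝ := 9 * ((439 / 18144 : ℝ) ^ ((1 : ℝ) / 4)) ^ 2 / 2

lemma sPaper_bounds : 1/2 < sPaper ∧ sPaper < 3/4 := by
  have ha : (0:ℝ) ≤ 439/18144 := by norm_num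
  have hx : ((439 / 18144 : ℝ) ^ ((1 : ℝ) / 4)) ^ 2 = Real.sqrt (439/18144) := by
    rw [Real.sqrt_eq_rpow, ← Real.rpow_natCast ((439 / 18144 : ℝ) ^ ((1 : ℝ) / 4)) 2,
      ← Real.rpow_mul ha]
    norm_num
  have h1 := Real.sq_sqrt ha
  have h2 := Real.sqrt_nonneg (439/18144 : ℝ)
  constructor
  · rw [sPaper, hx]; nlinarith [h1, h2]
  · rw [sPaper, hx]; nlinarith [h1, h2]

set_option maxHeartbeats 1600000 in
/-- For all large `n`, the function `r ↦ s^r · C(n−r−1, r−1)` on `1 ≤ r ≤ n/2`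
is maximized at `r = r*(n)`. -/
theorem stmt_6 :
    ∃ n₀ : ℕ, ∀ n : ℕ, n₀ ≤ n → ∀ r : ℕ, 1 ≤ r → 2 * r ≤ n →
      sPaper ^ r * (Nat.choose (n - r - 1) (r - 1) : ℝ) ≤
        sPaper ^ (rstar sPaper n) *
          (Nat.choose (n - rstar sPaper n - 1) (rstar sPaper n - 1) : ℝ) := by
  refine ⟨100, ?_⟩
  intro n hn r hr1 hr2
  set s := sPaper with hsdef
  obtain ⟨hs1, hs2⟩ := sPaper_bounds
  rw [← hsdef] at hs1 hs2
  clear_value s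
  have hs0 : (0:ℝ) < s := by linarith
  have hnR : (100:ℝ) ≤ (n:ℝ) := by exact_mod_cast hn
  set Pv : ℝ := (4*s+1)*(n:ℝ)*((n:ℝ)-2)+(2*s+1)^2 with hPdef
  have hP0 : 0 ≤ Pv := by
    rw [hPdef]
    have h1 : (0:ℝ) ≤ ((n:ℝ)) - 2 := by linarith
    have h2 : (0:ℝ) ≤ (4*s+1)*(n:ℝ) := by nlinarith
    nlinarith [mul_nonneg h2 h1, sq_nonneg (2*s+1)]
  set q : ℝ := Real.sqrt Pv with hqdef
  have hq0 : 0 ≤ q := Real.sqrt_nonneg _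
  have hq2 : q^2 = Pv := Real.sq_sqrt hP0
  clear_value q
  clear_value Pv
  set ρ : ℝ := (n:ℝ)/2 - (2*s+1+q)/(8*s+2) with hρdef
  clear_value ρ
  have hrst : rstar s n = (⌈ρ⌉).toNat := by
    unfold rstar
    rw [hρdef, hqdef, hPdef]
  rw [hrst]
  set rst : ℕ := (⌈ρ⌉).toNat with hrstdef
  clear_value rst
  -- basic positivity of ρ
  have hApos : (0:ℝ) < (4*s+1)*(n:ℝ) - (2*s+1) := by nlinarith [hnR, hs1, hs2]
  have hA : q < (4*s+1)*(n:ℝ) - (2*s+1) := by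
    have h1 : q^2 < ((4*s+1)*(n:ℝ) - (2*s+1))^2 := by
      rw [hq2, hPdef]
      have hps : (0:ℝ) < s*(4*s+1)*(n:ℝ)*((n:ℝ)-1) := by
        apply mul_pos (mul_pos (mul_pos hs0 (by linarith)) (by linarith))
        linarith
      nlinarith [hps]
    nlinarith [h1, hq0, hApos]
  have hρpos : 0 < ρ := by
    rw [hρdef]
    have h82 : (0:ℝ) < 8*s+2 := by linarith
    have : (2*s+1+q)/(8*s+2) < (n:ℝ)/2 := by
      rw [div_lt_iff₀ h82]; nlinarith [hA]
    linarith
  have hceil1 : (0:ℤ) < ⌈ρ⌉ := Int.lt_ceil.mpr (by exact_mod_cast hρpos)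
  have hrst_cast : (rst : ℝ) = ((⌈ρ⌉ : ℤ) : ℝ) := by
    rw [hrstdef]
    have h := Int.toNat_of_nonneg (by omega : (0:ℤ) ≤ ⌈ρ⌉)
    exact_mod_cast congrArg (fun z : ℤ => (z : ℝ)) h
  have hrst1 : 1 ≤ rst := by rw [hrstdef]; omega
  have hρlo : ρ ≤ (rst:ℝ) := by rw [hrst_cast]; exact Int.le_ceil ρ
  have hρhi : (rst:ℝ) < ρ + 1 := by rw [hrst_cast]; exact Int.ceil_lt_add_one ρ
  -- upper bound on rst
  have hqge : 14*s+3 ≤ q := by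
    have h1 : (14*s+3)^2 ≤ q^2 := by
      rw [hq2, hPdef]
      nlinarith [hnR, hs1, hs2, mul_nonneg (show (0:ℝ) ≤ 4*s+1 by linarith)
        (show (0:ℝ) ≤ (n:ℝ)-2 by linarith)]
    have hpos : (0:ℝ) < 14*s+3 := by linarith
    nlinarith [h1, hq0, hpos]
  have hρub : ρ ≤ (n:ℝ)/2 - 2 := by
    rw [hρdef]
    have h82 : (0:ℝ) < 8*s+2 := by linarith
    have : (2:ℝ) ≤ (2*s+1+q)/(8*s+2) := by
      rw [le_div_iff₀ h82]; linarith
    linarith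
  have hrstn : 2*rst + 2 ≤ n := by
    have h2 : ((2*rst + 2 : ℕ) : ℝ) < (n:ℝ) := by push_cast; linarith
    exact_mod_cast h2.le
  -- step lemmas
  have step_up : ∀ k, 1 ≤ k → 2*k+2 ≤ n → (k:ℝ) ≤ ρ →
      s^k * ((n - k - 1).choose (k-1) : ℝ) ≤
        s^(k+1) * ((n - (k+1) - 1).choose ((k+1)-1) : ℝ) := by
    intro k hk hkn hkρ
    obtain ⟨j, rfl⟩ : ∃ j, k = j + 1 := ⟨k-1, by omega⟩
    obtain ⟨a, hna⟩ : ∃ a, n = 2*j + a + 4 := ⟨n - (2*j+4), by omega⟩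
    have e1 : n - (j+1) - 1 = j+a+2 := by omega
    have e2 : (j+1) - 1 = j := by omega
    have e3 : n - (j+1+1) - 1 = j+a+1 := by omega
    have e4 : (j+1+1) - 1 = j+1 := by omega
    rw [e1, e2, e3, e4]
    have hquad := quad_up s ((j:ℝ)+1) ((n:ℕ):ℝ) q hs1 hq0
      (by rw [hq2, hPdef]) (by rw [← hρdef]; push_cast at hkρ; linarith)
    have hq' : ((j:ℝ)+1)*((j:ℝ)+(a:ℝ)+2) ≤ s*((a:ℝ)+2)*((a:ℝ)+1) := by
      have hnc : (n:ℝ) = 2*(j:ℝ) + (a:ℝ) + 4 := by exact_mod_cast congrArg (Nat.cast : ℕ → ℝ) hna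
      rw [hnc] at hquad
      nlinarith [hquad]
    have hcidR : ((j:ℝ)+1) * (((j:ℝ)+(a:ℝ)+2) * ((j+a+1).choose (j+1) : ℝ)) =
        ((a:ℝ)+2)*(((a:ℝ)+1)*((j+a+2).choose j : ℝ)) := by
      exact_mod_cast chooseId j a
    set c1 : ℝ := ((j+a+2).choose j : ℝ) with hc1def
    set c2 : ℝ := ((j+a+1).choose (j+1) : ℝ) with hc2def
    have hc2 : 0 ≤ c2 := Nat.cast_nonneg _
    have hpp : (0:ℝ) < ((a:ℝ)+2)*((a:ℝ)+1) := by positivity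
    have key : c1 ≤ s * c2 := by
      nlinarith [hcidR, hq', hc2, hpp, mul_nonneg (sub_nonneg.mpr hq') hc2]
    calc s^(j+1) * c1 ≤ s^(j+1) * (s * c2) :=
          mul_le_mul_of_nonneg_left key (by positivity)
      _ = s^(j+1+1) * c2 := by ring
  have step_down : ∀ k, 1 ≤ k → 2*k+2 ≤ n → ρ ≤ (k:ℝ) →
      s^(k+1) * ((n - (k+1) - 1).choose ((k+1)-1) : ℝ) ≤
        s^k * ((n - k - 1).choose (k-1) : ℝ) := by
    intro k hk hkn hkρ
    obtain ⟨j, rfl⟩ : ∃ j, k = j + 1 := ⟨k-1, by omega⟩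
    obtain ⟨a, hna⟩ : ∃ a, n = 2*j + a + 4 := ⟨n - (2*j+4), by omega⟩
    have e1 : n - (j+1) - 1 = j+a+2 := by omega
    have e2 : (j+1) - 1 = j := by omega
    have e3 : n - (j+1+1) - 1 = j+a+1 := by omega
    have e4 : (j+1+1) - 1 = j+1 := by omega
    rw [e1, e2, e3, e4]
    have hnc : (n:ℝ) = 2*(j:ℝ) + (a:ℝ) + 4 := by exact_mod_cast congrArg (Nat.cast : ℕ → ℝ) hna
    have hquad := quad_down s ((j:ℝ)+1) ((n:ℕ):ℝ) q hs1 hq0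
      (by rw [hq2, hPdef]) (by rw [← hρdef]; push_cast at hkρ; linarith)
      (by rw [hnc]; linarith)
    have hq' : s*((a:ℝ)+2)*((a:ℝ)+1) ≤ ((j:ℝ)+1)*((j:ℝ)+(a:ℝ)+2) := by
      rw [hnc] at hquad
      nlinarith [hquad]
    have hcidR : ((j:ℝ)+1) * (((j:ℝ)+(a:ℝ)+2) * ((j+a+1).choose (j+1) : ℝ)) =
        ((a:ℝ)+2)*(((a:ℝ)+1)*((j+a+2).choose j : ℝ)) := by
      exact_mod_cast chooseId j a
    set c1 : ℝ := ((j+a+2).choose j : ℝ) with hc1def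
    set c2 : ℝ := ((j+a+1).choose (j+1) : ℝ) with hc2def
    have hc2 : 0 ≤ c2 := Nat.cast_nonneg _
    have hpp : (0:ℝ) < ((a:ℝ)+2)*((a:ℝ)+1) := by positivity
    have key : s * c2 ≤ c1 := by
      nlinarith [hcidR, hq', hc2, hpp, mul_nonneg (sub_nonneg.mpr hq') hc2]
    calc s^(j+1+1) * c2 = s^(j+1) * (s * c2) := by ring
      _ ≤ s^(j+1) * c1 := mul_le_mul_of_nonneg_left key (by positivity)
  -- upward chain
  have up : ∀ m : ℕ, r + m ≤ rst →
      s^r * ((n-r-1).choose (r-1) : ℝ) ≤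
        s^(r+m) * ((n-(r+m)-1).choose ((r+m)-1) : ℝ) := by
    intro m
    induction m with
    | zero => intro _; exact le_refl _
    | succ m ih =>
      intro hm
      have h1 := ih (by omega)
      have hkρ : ((r+m : ℕ):ℝ) ≤ ρ := by
        have hle : ((r+m:ℕ):ℝ) + 1 ≤ (rst:ℝ) := by exact_mod_cast hm
        linarith
      have h2 := step_up (r+m) (by omega) (by omega) hkρ
      exact h1.trans h2
  -- downward chain
  have down : ∀ m : ℕ, 2*(rst+m) ≤ n →
      s^(rst+m) * ((n-(rst+m)-1).choose ((rst+m)-1) : ℝ) ≤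
        s^rst * ((n-rst-1).choose (rst-1) : ℝ) := by
    intro m
    induction m with
    | zero => intro _; exact le_refl _
    | succ m ih =>
      intro hm
      have hkρ : ρ ≤ ((rst+m : ℕ):ℝ) := by
        have : (rst:ℝ) ≤ ((rst+m:ℕ):ℝ) := by exact_mod_cast Nat.le_add_right rst m
        linarith
      have h2 := step_down (rst+m) (by omega) (by omega) hkρ
      exact h2.trans (ih (by omega))
  rcases le_or_gt r rst with h | h
  · obtain ⟨m, hm⟩ : ∃ m, rst = r + m := ⟨rst - r, by omega⟩
    rw [hm]
    exact up m (by omega)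
  · obtain ⟨m, hm⟩ : ∃ m, r = rst + m := ⟨r - rst, by omega⟩
    rw [hm]
    exact down m (by omega)
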